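/- The MWNSW fairness notion suffers from the inversion paradox for indivisible goods with additive valuations. Concretely, take 3 agents and 3 items e_1, e_2, e_3 with additive valuations v_1 = (2, 1, 0), v_2 = (0, 1, 5), v_3 = (1, 0, 4) (listing item values in order), and entitlement vectors b' = (1/3, 1/3, 1/3) and b = (13/20, 1/3, 1/60). Then b 1-improves b'; the unique allocation maximizing the weighted Nash social welfare ∏_i v_i(A_i)^{b'_i} under b' is ({e_1}, {e_2}, {e_3}), giving agent 1 value 2; and the unique allocation maximizing ∏_i v_i(A_i)^{b_i} under b is ({e_2}, {e_3}, {e_1}), giving agent 1 value only 1. Hence the unique MWNSW allocation under the larger entitlement gives agent 1 strictly less value. -/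

import Mathlib

namespace Stmt13

/-- A partition of the items into (possibly empty) bundles. -/
def IsPartition {n m : ℕ} (A : Fin n → Finset (Fin m)) : Prop :=
  (∀ i j, i ≠ j → Disjoint (A i) (A j)) ∧ ∀ e, ∃ i, e ∈ A i

/-- Additive value of a bundle. -/
def bval {m : ℕ} (w : Fin m → ℝ) (S : Finset (Fin m)) : ℝ := ∑ e ∈ S, w e

/-- The additive valuations: v₁ = (2,1,0), v₂ = (0,1,5), v₃ = (1,0,4). -/
def v : Fin 3 → Fin 3 → ℝ := ![![2, 1, 0], ![0, 1, 5], ![1, 0, 4]]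

/-- Entitlement vector b' = (1/3, 1/3, 1/3). -/
noncomputable def b' : Fin 3 → ℝ := ![1/3, 1/3, 1/3]

/-- Entitlement vector b = (13/20, 1/3, 1/60). -/
noncomputable def b : Fin 3 → ℝ := ![13/20, 1/3, 1/60]

/-- The weighted Nash social welfare of an allocation under entitlements `β`
(using real powers, with the convention `0 ^ βᵢ = 0` for `βᵢ > 0`). -/
noncomputable def wnsw (β : Fin 3 → ℝ) (A : Fin 3 → Finset (Fin 3)) : ℝ :=
  ∏ i, (bval (v i) (A i)) ^ (β i)

/-- Acceptable under MWNSW: a partition maximizing WNSW over all partitions. -/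
noncomputable def MwnswAcc (β : Fin 3 → ℝ) (A : Fin 3 → Finset (Fin 3)) : Prop :=
  IsPartition A ∧ ∀ B : Fin 3 → Finset (Fin 3), IsPartition B → wnsw β B ≤ wnsw β A

set_option maxRecDepth 100000 in
set_option synthInstance.maxSize 4000 in
set_option synthInstance.maxHeartbeats 4000000 in
set_option maxHeartbeats 4000000 in
lemma enum (A : Fin 3 → Finset (Fin 3)) (h : IsPartition A) :
      A = ![{0, 1, 2}, ∅, ∅] ∨
      A = ![{0, 1}, {2}, ∅] ∨
      A = ![{0, 1}, ∅, {2}] ∨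
      A = ![{0, 2}, {1}, ∅] ∨
      A = ![{0}, {1, 2}, ∅] ∨
      A = ![{0}, {1}, {2}] ∨
      A = ![{0, 2}, ∅, {1}] ∨
      A = ![{0}, {2}, {1}] ∨
      A = ![{0}, ∅, {1, 2}] ∨
      A = ![{1, 2}, {0}, ∅] ∨
      A = ![{1}, {0, 2}, ∅] ∨
      A = ![{1}, {0}, {2}] ∨
      A = ![{2}, {0, 1}, ∅] ∨
      A = ![∅, {0, 1, 2}, ∅] ∨
      A = ![∅, {0, 1}, {2}] ∨
      A = ![{2}, {0}, {1}] ∨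
      A = ![∅, {0, 2}, {1}] ∨
      A = ![∅, {0}, {1, 2}] ∨
      A = ![{1, 2}, ∅, {0}] ∨
      A = ![{1}, {2}, {0}] ∨
      A = ![{1}, ∅, {0, 2}] ∨
      A = ![{2}, {1}, {0}] ∨
      A = ![∅, {1, 2}, {0}] ∨
      A = ![∅, {1}, {0, 2}] ∨
      A = ![{2}, ∅, {0, 1}] ∨
      A = ![∅, {2}, {0, 1}] ∨
      A = ![∅, ∅, {0, 1, 2}] := by
  revert h; revert A
  unfold IsPartition
  exact of_decide_eq_true (by decide)

lemma part1 : IsPartition ![({0} : Finset (Fin 3)), {1}, {2}] := by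
  constructor
  · decide
  · decide

lemma part2 : IsPartition ![({1} : Finset (Fin 3)), {2}, {0}] := by
  constructor
  · decide
  · decide

lemma pos1 : 0 < wnsw b' ![{0}, {1}, {2}] := by
  norm_num [wnsw, bval, b', v, Fin.prod_univ_three, Matrix.cons_val_two, Matrix.tail_cons, Matrix.head_cons]
  positivity

lemma pos2 : 0 < wnsw b ![{1}, {2}, {0}] := by
  norm_num [wnsw, bval, b, v, Fin.prod_univ_three, Matrix.cons_val_two, Matrix.tail_cons, Matrix.head_cons]
  positivity

lemma lt1 : wnsw b' ![{1}, {2}, {0}] < wnsw b' ![{0}, {1}, {2}] := by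
  norm_num [wnsw, bval, b', v, Fin.prod_univ_three, Real.one_rpow, Matrix.cons_val_two, Matrix.tail_cons, Matrix.head_cons]
  rw [← Real.mul_rpow (by norm_num) (by norm_num)]
  exact Real.rpow_lt_rpow (by norm_num) (by norm_num) (by norm_num)

lemma lt2 : wnsw b ![{0}, {1}, {2}] < wnsw b ![{1}, {2}, {0}] := by
  norm_num [wnsw, bval, b, v, Fin.prod_univ_three, Real.one_rpow, Matrix.cons_val_two, Matrix.tail_cons, Matrix.head_cons]
  have h4 : (4:ℝ)^((1:ℝ)/60) = 2^((1:ℝ)/30) := by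
    rw [show (4:ℝ) = 2^(2:ℝ) by
      rw [show (2:ℝ) = ((2:ℕ):ℝ) by norm_num, Real.rpow_natCast]; norm_num,
      ← Real.rpow_mul (by norm_num)]
    norm_num
  rw [h4, ← Real.rpow_add (by norm_num), show (13:ℝ)/20 + 1/30 = 41/60 by norm_num]
  have key : ((2:ℝ)^((41:ℝ)/60))^(60:ℕ) < ((5:ℝ)^((1:ℝ)/3))^(60:ℕ) := by
    rw [← Real.rpow_natCast ((2:ℝ)^((41:ℝ)/60)) 60, ← Real.rpow_natCast ((5:ℝ)^((1:ℝ)/3)) 60,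
        ← Real.rpow_mul (by norm_num), ← Real.rpow_mul (by norm_num)]
    push_cast
    rw [show (41:ℝ)/60 * 60 = ((41:ℕ):ℝ) by push_cast; norm_num,
        show (1:ℝ)/3 * 60 = ((20:ℕ):ℝ) by push_cast; norm_num,
        Real.rpow_natCast, Real.rpow_natCast]
    norm_num
  exact lt_of_pow_lt_pow_left₀ 60 (by positivity) key

lemma cmp1 (A : Fin 3 → Finset (Fin 3)) (h : IsPartition A) :
    A = ![{0}, {1}, {2}] ∨ wnsw b' A < wnsw b' ![{0}, {1}, {2}] := by
  rcases enum A h with rfl|rfl|rfl|rfl|rfl|rfl|rfl|rfl|rfl|rfl|rfl|rfl|rfl|rfl|rfl|rfl|rfl|rfl|rfl|rfl|rfl|rfl|rfl|rfl|rfl|rfl|rfl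
  all_goals first
    | (left; rfl)
    | (right; exact lt1)
    | (right
       refine lt_of_le_of_lt (le_of_eq ?_) pos1
       norm_num [wnsw, bval, b', v, Fin.prod_univ_three, Real.zero_rpow, Matrix.cons_val_two, Matrix.tail_cons, Matrix.head_cons])

lemma cmp2 (A : Fin 3 → Finset (Fin 3)) (h : IsPartition A) :
    A = ![{1}, {2}, {0}] ∨ wnsw b A < wnsw b ![{1}, {2}, {0}] := by
  rcases enum A h with rfl|rfl|rfl|rfl|rfl|rfl|rfl|rfl|rfl|rfl|rfl|rfl|rfl|rfl|rfl|rfl|rfl|rfl|rfl|rfl|rfl|rfl|rfl|rfl|rfl|rfl|rfl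
  all_goals first
    | (left; rfl)
    | (right; exact lt2)
    | (right
       refine lt_of_le_of_lt (le_of_eq ?_) pos2
       norm_num [wnsw, bval, b, v, Fin.prod_univ_three, Real.zero_rpow, Matrix.cons_val_two, Matrix.tail_cons, Matrix.head_cons])

/-- MWNSW suffers from the inversion paradox: b 1-improves b',
yet the unique MWNSW allocation for b' is ({e₁},{e₂},{e₃}) giving agent 1
value 2, while the unique MWNSW allocation for b is ({e₂},{e₃},{e₁}) giving
agent 1 value only 1. -/
theorem stmt_13 :
    -- b 1-improves b'
    (b' 0 < b 0 ∧ ∀ j, j ≠ 0 → b j ≤ b' j) ∧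
    -- under b', the unique MWNSW allocation is ({e₁},{e₂},{e₃}); agent 1 gets value 2
    (MwnswAcc b' ![{0}, {1}, {2}] ∧
      (∀ A, MwnswAcc b' A → ∀ i, A i = ![({0} : Finset (Fin 3)), {1}, {2}] i) ∧
      bval (v 0) {0} = 2) ∧
    -- under b, the unique MWNSW allocation is ({e₂},{e₃},{e₁}); agent 1 gets value 1
    (MwnswAcc b ![{1}, {2}, {0}] ∧
      (∀ A, MwnswAcc b A → ∀ i, A i = ![({1} : Finset (Fin 3)), {2}, {0}] i) ∧
      bval (v 0) {1} = 1) := by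
  refine ⟨⟨by norm_num [b, b'], ?_⟩, ⟨⟨part1, ?_⟩, ?_, ?_⟩, ⟨part2, ?_⟩, ?_, ?_⟩
  · intro j hj
    fin_cases j
    · simp at hj
    · norm_num [b, b']
    · norm_num [b, b']
  · intro B hB
    rcases cmp1 B hB with rfl | h
    · exact le_rfl
    · exact h.le
  · intro A hA i
    rcases cmp1 A hA.1 with rfl | h
    · rfl
    · exact absurd (hA.2 _ part1) (not_le.2 h)
  · norm_num [bval, v]
  · intro B hB
    rcases cmp2 B hB with rfl | h
    · exact le_rfl
    · exact h.le
  · intro A hA i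
    rcases cmp2 A hA.1 with rfl | h
    · rfl
    · exact absurd (hA.2 _ part2) (not_le.2 h)
  · norm_num [bval, v]

end Stmt13
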